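/- Let δ > 0 and let H, L₁,…,L_m be matrices on ℂ^d with H Hermitian. Define the Lindbladian L[ρ] = −i[H,ρ] + Σ_j (L_j ρ L_j† − ½L_j†L_j ρ − ½ρ L_j†L_j), and the map M_δ[Q] = Σ_{j=0}^m A_j Q A_j† with A₀ = I − (δ/2)Σ_j L_j†L_j − iδH and A_j = √δ L_j (j ≥ 1). Then for any matrix Q with ‖Q‖₁ = 1, ‖M_δ[Q] − Q − δL[Q]‖₁ ≤ δ²(Σ_j ‖L_j‖² + ‖H‖)². -/

import Mathlib

open scoped ComplexOrder Matrix

/-- The trace norm `‖A‖₁ = Tr √(AᴴA)` of a complex square matrix. -/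
noncomputable def traceNorm {n : Type*} [Fintype n] [DecidableEq n]
    (A : Matrix n n ℂ) : ℝ :=
  (((Matrix.posSemidef_conjTranspose_mul_self A).1.eigenvectorUnitary : Matrix n n ℂ) *
      Matrix.diagonal (((↑) : ℝ → ℂ) ∘ (Real.sqrt ·) ∘ (Matrix.posSemidef_conjTranspose_mul_self A).1.eigenvalues) *
      (star (Matrix.posSemidef_conjTranspose_mul_self A).1.eigenvectorUnitary : Matrix n n ℂ)).trace.re

/-- The operator norm (largest singular value) of a complex square matrix. -/
noncomputable def opNorm {n : Type*} [Fintype n] [DecidableEq n]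
    (A : Matrix n n ℂ) : ℝ :=
  ‖LinearMap.toContinuousLinearMap (Matrix.toEuclideanLin A)‖

section Aux
open Matrix
open scoped Matrix.Norms.L2Operator

lemma opNorm_eq {n : Type*} [Fintype n] [DecidableEq n] (A : Matrix n n ℂ) :
    opNorm A = ‖A‖ := rfl


variable {n : Type*} [Fintype n] [DecidableEq n]

lemma inner_toEuclideanLin (A : Matrix n n ℂ) (x y : EuclideanSpace ℂ n) :
    @inner ℂ _ _ x (Matrix.toEuclideanLin A y) =
      dotProduct (star (WithLp.equiv 2 _ x)) (A *ᵥ (WithLp.equiv 2 _ y)) := by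
  rw [EuclideanSpace.inner_eq_star_dotProduct, dotProduct_comm]
  rfl

lemma mulVec_norm_le (A : Matrix n n ℂ) (x : EuclideanSpace ℂ n) :
    ‖Matrix.toEuclideanLin A x‖ ≤ ‖A‖ * ‖x‖ :=
  A.l2_opNorm_mulVec x

lemma norm_le_one_of_psd (A : Matrix n n ℂ)
    (h : ((1 : Matrix n n ℂ) - Aᴴ * A).PosSemidef) : ‖A‖ ≤ 1 := by
  rw [l2_opNorm_def]
  refine ContinuousLinearMap.opNorm_le_bound _ zero_le_one fun x => ?_
  rw [one_mul]
  show ‖(Matrix.toEuclideanLin A) x‖ ≤ ‖x‖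
  have hx : ‖(Matrix.toEuclideanLin A) x‖ ^ 2 ≤ ‖x‖ ^ 2 := by
    have h1 : Complex.re (@inner ℂ _ _ (Matrix.toEuclideanLin A x) (Matrix.toEuclideanLin A x))
        = ‖(Matrix.toEuclideanLin A) x‖ ^ 2 := by
      exact_mod_cast inner_self_eq_norm_sq (𝕜 := ℂ) _
    have h2 : Complex.re (@inner ℂ _ _ x x) = ‖x‖ ^ 2 := by
      exact_mod_cast inner_self_eq_norm_sq (𝕜 := ℂ) _
    rw [← h1, ← h2]
    have h3 := h.dotProduct_mulVec_nonneg (WithLp.equiv 2 _ x)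
    rw [sub_mulVec, dotProduct_sub, one_mulVec, sub_nonneg] at h3
    have h4 := (Complex.le_def.mp h3).1
    have h5 : @inner ℂ _ _ (Matrix.toEuclideanLin A x) (Matrix.toEuclideanLin A x) =
        dotProduct (star (WithLp.equiv 2 _ x)) ((Aᴴ * A) *ᵥ (WithLp.equiv 2 _ x)) := by
      rw [inner_toEuclideanLin]
      rw [show WithLp.equiv 2 _ (Matrix.toEuclideanLin A x) = A *ᵥ WithLp.equiv 2 _ x from rfl]
      simp [star_mulVec, dotProduct_mulVec, vecMul_vecMul, toLin'_apply]
    rw [h5, EuclideanSpace.inner_eq_star_dotProduct]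
    rw [dotProduct_comm x.ofLp]
    exact h4
  have := norm_nonneg ((Matrix.toEuclideanLin A) x)
  have := norm_nonneg x
  nlinarith

lemma re_trace_conj_le (S D : Matrix n n ℂ) (hS : S.IsHermitian) :
    (Matrix.trace (S * D * S)).re ≤ ‖D‖ * (Matrix.trace (S * S)).re := by
  classical
  -- columns of S as Euclidean vectors
  set x : n → EuclideanSpace ℂ n := fun i => (WithLp.equiv 2 (n → ℂ)).symm (fun j => S j i) with hx
  have hcol : ∀ i, WithLp.equiv 2 (n → ℂ) (x i) = fun j => S j i := fun i => rfl
  have hstar : ∀ i j, star (S j i) = S i j := by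
    intro i j
    conv_rhs => rw [← hS]
    simp [Matrix.conjTranspose_apply]
  have key : ∀ i, ((S * D * S) i i).re ≤ ‖D‖ * ((S * S) i i).re := by
    intro i
    have e1 : (S * D * S) i i = @inner ℂ _ _ (x i) (Matrix.toEuclideanLin D (x i)) := by
      rw [inner_toEuclideanLin]
      simp only [hcol, Matrix.mul_apply, Matrix.mulVec, dotProduct, Pi.star_apply, hstar]
      simp only [Finset.sum_mul, Finset.mul_sum]
      rw [Finset.sum_comm]
      exact Finset.sum_congr rfl fun j _ => Finset.sum_congr rfl fun k _ => by ring
    have e2 : ((S * S) i i).re = ‖x i‖ ^ 2 := by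
      have : (S * S) i i = @inner ℂ _ _ (x i) (x i) := by
        rw [EuclideanSpace.inner_eq_star_dotProduct]
        simp only [hcol, Matrix.mul_apply, dotProduct, Pi.star_apply, hstar]
        exact Finset.sum_congr rfl fun j _ => by
          show S i j * S j i = S j i * star (S j i)
          rw [hstar, mul_comm]
      rw [this]
      exact_mod_cast inner_self_eq_norm_sq (𝕜 := ℂ) (x i)
    rw [e1, e2]
    have h1 : (@inner ℂ _ _ (x i) (Matrix.toEuclideanLin D (x i))).re ≤
        ‖@inner ℂ _ _ (x i) (Matrix.toEuclideanLin D (x i))‖ := Complex.re_le_norm _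
    have h2 := norm_inner_le_norm (𝕜 := ℂ) (x i) (Matrix.toEuclideanLin D (x i))
    have h3 := mulVec_norm_le D (x i)
    have h4 := norm_nonneg (x i)
    nlinarith [norm_nonneg D, norm_nonneg (Matrix.toEuclideanLin D (x i))]
  simp only [Matrix.trace, Matrix.diag, Complex.re_sum]
  calc ∑ i, ((S * D * S) i i).re ≤ ∑ i, ‖D‖ * ((S * S) i i).re := Finset.sum_le_sum fun i _ => key i
    _ = ‖D‖ * ∑ i, ((S * S) i i).re := by rw [Finset.mul_sum]

noncomputable def Matrix.PosSemidef.sqrt {P : Matrix n n ℂ} (hP : P.PosSemidef) :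
    Matrix n n ℂ :=
  (hP.1.eigenvectorUnitary : Matrix n n ℂ) *
      Matrix.diagonal (((↑) : ℝ → ℂ) ∘ (Real.sqrt ·) ∘ hP.1.eigenvalues) *
      (star hP.1.eigenvectorUnitary : Matrix n n ℂ)

theorem Matrix.PosSemidef.posSemidef_sqrt {P : Matrix n n ℂ} (hP : P.PosSemidef) :
    hP.sqrt.PosSemidef := by
  have hd : (Matrix.diagonal (((↑) : ℝ → ℂ) ∘ (Real.sqrt ·) ∘ hP.1.eigenvalues)).PosSemidef := by
    refine Matrix.PosSemidef.diagonal fun i => ?_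
    simp only [Function.comp_apply, Pi.zero_apply]
    exact_mod_cast Real.sqrt_nonneg _
  have := hd.mul_mul_conjTranspose_same (hP.1.eigenvectorUnitary : Matrix n n ℂ)
  unfold Matrix.PosSemidef.sqrt
  simpa only [Unitary.coe_star, Matrix.star_eq_conjTranspose] using this

theorem Matrix.PosSemidef.sqrt_mul_self {P : Matrix n n ℂ} (hP : P.PosSemidef) :
    hP.sqrt * hP.sqrt = P := by
  have hU : (star hP.1.eigenvectorUnitary : Matrix n n ℂ) * hP.1.eigenvectorUnitary = 1 := by
    have := hP.1.eigenvectorUnitary.2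
    rw [Matrix.mem_unitaryGroup_iff'] at this
    exact this
  conv_rhs => rw [hP.1.spectral_theorem, Unitary.conjStarAlgAut_apply]
  unfold Matrix.PosSemidef.sqrt
  rw [show ∀ U D V : Matrix n n ℂ, U * D * V * (U * D * V) = U * D * (V * U) * D * V from
      fun _ _ _ => by simp only [Matrix.mul_assoc], hU, Matrix.mul_one,
    Matrix.mul_assoc _ (Matrix.diagonal _) (Matrix.diagonal _), Matrix.diagonal_mul_diagonal]
  congr 3
  funext i
  simp only [Function.comp_apply, ← Complex.ofReal_mul, Real.mul_self_sqrt (hP.eigenvalues_nonneg i)]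
  rfl

noncomputable def sqrtM (M : Matrix n n ℂ) : Matrix n n ℂ :=
  (Matrix.posSemidef_conjTranspose_mul_self M).sqrt

lemma sqrtM_psd (M : Matrix n n ℂ) : (sqrtM M).PosSemidef :=
  Matrix.PosSemidef.posSemidef_sqrt _

lemma sqrtM_mul_self (M : Matrix n n ℂ) : sqrtM M * sqrtM M = Mᴴ * M :=
  Matrix.PosSemidef.sqrt_mul_self _

noncomputable def specV (M : Matrix n n ℂ) : Matrix n n ℂ :=
  (sqrtM_psd M).1.eigenvectorUnitary

noncomputable def specμ (M : Matrix n n ℂ) : n → ℝ :=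
  (sqrtM_psd M).1.eigenvalues

noncomputable def spec (M : Matrix n n ℂ) (f : ℝ → ℂ) : Matrix n n ℂ :=
  specV M * Matrix.diagonal (fun i => f (specμ M i)) * star (specV M)

lemma specμ_nonneg (M : Matrix n n ℂ) (i : n) : 0 ≤ specμ M i :=
  (sqrtM_psd M).eigenvalues_nonneg i

lemma specV_star_mul_self (M : Matrix n n ℂ) : star (specV M) * specV M = 1 := by
  have := ((sqrtM_psd M).1.eigenvectorUnitary).2
  rw [Matrix.mem_unitaryGroup_iff'] at this
  exact this

lemma specV_mul_self_star (M : Matrix n n ℂ) : specV M * star (specV M) = 1 := by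
  have := ((sqrtM_psd M).1.eigenvectorUnitary).2
  rw [Matrix.mem_unitaryGroup_iff] at this
  exact this

lemma spec_mul (M : Matrix n n ℂ) (f g : ℝ → ℂ) :
    spec M f * spec M g = spec M (fun t => f t * g t) := by
  unfold spec
  simp only [Matrix.mul_assoc]
  rw [← Matrix.mul_assoc (star (specV M)) (specV M), specV_star_mul_self, Matrix.one_mul,
    ← Matrix.mul_assoc (Matrix.diagonal _) (Matrix.diagonal _), Matrix.diagonal_mul_diagonal]

lemma spec_id (M : Matrix n n ℂ) : spec M (fun t => (t : ℂ)) = sqrtM M := by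
  conv_rhs => rw [(sqrtM_psd M).1.spectral_theorem]
  rfl

lemma spec_one (M : Matrix n n ℂ) : spec M (fun _ => 1) = 1 := by
  unfold spec
  rw [Matrix.diagonal_one, Matrix.mul_one, specV_mul_self_star]

lemma spec_zero (M : Matrix n n ℂ) : spec M (fun _ => 0) = 0 := by
  unfold spec
  rw [show (Matrix.diagonal (fun _ : n => (0:ℂ))) = 0 from Matrix.diagonal_zero,
    Matrix.mul_zero, Matrix.zero_mul]

lemma spec_conjTranspose (M : Matrix n n ℂ) (g : ℝ → ℝ) :
    (spec M (fun t => ((g t : ℝ) : ℂ)))ᴴ = spec M (fun t => ((g t : ℝ) : ℂ)) := by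
  unfold spec
  rw [Matrix.conjTranspose_mul, Matrix.conjTranspose_mul, Matrix.diagonal_conjTranspose]
  simp only [← Matrix.star_eq_conjTranspose, star_star, Pi.star_def, Complex.star_def,
    Complex.conj_ofReal]
  rw [Matrix.mul_assoc]

lemma spec_psd (M : Matrix n n ℂ) (g : ℝ → ℝ) (hg : ∀ t, 0 ≤ g t) :
    (spec M (fun t => ((g t : ℝ) : ℂ))).PosSemidef := by
  have hd : (Matrix.diagonal (fun i => ((g (specμ M i) : ℝ) : ℂ))).PosSemidef := by
    refine Matrix.PosSemidef.diagonal ?_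
    intro i
    show (0:ℂ) ≤ ((g (specμ M i) : ℝ) : ℂ)
    exact_mod_cast hg _
  have := hd.mul_mul_conjTranspose_same (specV M)
  unfold spec
  rwa [← Matrix.star_eq_conjTranspose] at this

lemma trace_spec (M : Matrix n n ℂ) (f : ℝ → ℂ) :
    (spec M f).trace = ∑ i, f (specμ M i) := by
  unfold spec
  rw [Matrix.trace_mul_cycle, specV_star_mul_self, Matrix.one_mul, Matrix.trace_diagonal]


/-- real functions used in the functional calculus -/
noncomputable def g0 : ℝ → ℝ := fun t => if t = 0 then 0 else t⁻¹
noncomputable def gind : ℝ → ℝ := fun t => if t = 0 then 0 else 1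
noncomputable def gj : ℝ → ℝ := fun t => if t = 0 then 1 else 0

noncomputable def pinvM (M : Matrix n n ℂ) : Matrix n n ℂ :=
  spec M (fun t => ((g0 t : ℝ) : ℂ))

noncomputable def EM (M : Matrix n n ℂ) : Matrix n n ℂ := M * pinvM M

lemma spec_add (M : Matrix n n ℂ) (f g : ℝ → ℂ) :
    spec M f + spec M g = spec M (fun t => f t + g t) := by
  unfold spec
  rw [← Matrix.add_mul, ← Matrix.mul_add, Matrix.diagonal_add]

lemma spec_congr (M : Matrix n n ℂ) {f g : ℝ → ℂ} (h : ∀ t, f t = g t) :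
    spec M f = spec M g := by
  unfold spec
  rw [show (fun i => f (specμ M i)) = (fun i => g (specμ M i)) from funext fun i => h _]

lemma traceNorm_eq (M : Matrix n n ℂ) : traceNorm M = (sqrtM M).trace.re := rfl

lemma conjTranspose_mul_self_eq_spec (M : Matrix n n ℂ) :
    Mᴴ * M = spec M (fun t => (t : ℂ) * (t : ℂ)) := by
  rw [← sqrtM_mul_self, ← spec_id M, spec_mul]

lemma M_mul_specJ (M : Matrix n n ℂ) : M * spec M (fun t => ((gj t : ℝ) : ℂ)) = 0 := by
  rw [← Matrix.conjTranspose_mul_self_eq_zero]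
  rw [Matrix.conjTranspose_mul, spec_conjTranspose]
  calc spec M (fun t => ((gj t : ℝ) : ℂ)) * Mᴴ * (M * spec M (fun t => ((gj t : ℝ) : ℂ)))
      = spec M (fun t => ((gj t : ℝ) : ℂ)) * (Mᴴ * M) * spec M (fun t => ((gj t : ℝ) : ℂ)) := by
        simp only [Matrix.mul_assoc]
    _ = 0 := by
        rw [conjTranspose_mul_self_eq_spec, spec_mul, spec_mul, ← spec_zero M]
        exact spec_congr M fun t => by by_cases h : t = 0 <;> simp [gj, h]

lemma EM_mul_sqrt (M : Matrix n n ℂ) : EM M * sqrtM M = M := by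
  unfold EM
  rw [Matrix.mul_assoc, ← spec_id M, pinvM, spec_mul]
  have h : spec M (fun t => ((g0 t : ℝ) : ℂ) * (t : ℂ)) =
      1 - spec M (fun t => ((gj t : ℝ) : ℂ)) := by
    rw [eq_sub_iff_add_eq, spec_add, ← spec_one M]
    exact spec_congr M fun t => by by_cases h : t = 0 <;> simp [g0, gj, h]
  rw [h, Matrix.mul_sub, Matrix.mul_one, M_mul_specJ, sub_zero]

lemma EM_conjTranspose (M : Matrix n n ℂ) : (EM M)ᴴ = pinvM M * Mᴴ := by
  unfold EM pinvM
  rw [Matrix.conjTranspose_mul, spec_conjTranspose]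

lemma EM_conjTranspose_mul_self (M : Matrix n n ℂ) :
    (EM M)ᴴ * EM M = spec M (fun t => ((gind t : ℝ) : ℂ)) := by
  rw [EM_conjTranspose, EM]
  calc pinvM M * Mᴴ * (M * pinvM M) = pinvM M * (Mᴴ * M) * pinvM M := by
        simp only [Matrix.mul_assoc]
    _ = _ := by
        rw [conjTranspose_mul_self_eq_spec, pinvM, spec_mul, spec_mul]
        refine spec_congr M fun t => ?_
        by_cases h : t = 0
        · simp [g0, gind, h]
        · push_cast
          rw [show g0 t = t⁻¹ from if_neg h, show gind t = 1 from if_neg h]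
          have ht : (t : ℂ) ≠ 0 := by exact_mod_cast h
          push_cast
          field_simp

lemma EM_norm_le_one (M : Matrix n n ℂ) : ‖EM M‖ ≤ 1 := by
  refine norm_le_one_of_psd _ ?_
  rw [EM_conjTranspose_mul_self]
  have h : (1 : Matrix n n ℂ) - spec M (fun t => ((gind t : ℝ) : ℂ)) =
      spec M (fun t => ((gj t : ℝ) : ℂ)) := by
    rw [sub_eq_iff_eq_add, spec_add, ← spec_one M]
    exact spec_congr M fun t => by by_cases h : t = 0 <;> simp [gind, gj, h]
  rw [h]
  exact spec_psd M gj fun t => by by_cases h : t = 0 <;> simp [gj, h]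

lemma traceNorm_nonneg' (M : Matrix n n ℂ) : 0 ≤ traceNorm M := by
  rw [traceNorm_eq, ← spec_id M, trace_spec]
  rw [Complex.re_sum]
  refine Finset.sum_nonneg fun i _ => ?_
  simpa using specμ_nonneg M i

/-- duality, easy direction -/
lemma re_trace_le (C M : Matrix n n ℂ) :
    (Matrix.trace (C * M)).re ≤ ‖C‖ * traceNorm M := by
  have hP := sqrtM_psd M
  set S : Matrix n n ℂ := hP.sqrt with hSdef
  have hSS : S * S = sqrtM M := hP.sqrt_mul_self
  have hSh : S.IsHermitian := hP.posSemidef_sqrt.1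
  have hM : M = EM M * (S * S) := by rw [hSS, EM_mul_sqrt]
  have h1 : Matrix.trace (C * M) = Matrix.trace (S * (C * EM M) * S) := by
    conv_lhs => rw [hM]
    rw [show C * (EM M * (S * S)) = (C * EM M * S) * S by simp only [Matrix.mul_assoc],
      Matrix.trace_mul_comm, ← Matrix.mul_assoc, ← Matrix.mul_assoc]
  rw [h1]
  have h2 := re_trace_conj_le S (C * EM M) hSh
  rw [hSS, ← traceNorm_eq] at h2
  refine h2.trans ?_
  have h3 : ‖C * EM M‖ ≤ ‖C‖ := by
    calc ‖C * EM M‖ ≤ ‖C‖ * ‖EM M‖ := norm_mul_le _ _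
      _ ≤ ‖C‖ * 1 := by
          exact mul_le_mul_of_nonneg_left (EM_norm_le_one M) (norm_nonneg _)
      _ = ‖C‖ := mul_one _
  exact mul_le_mul_of_nonneg_right h3 (traceNorm_nonneg' M)

/-- duality, attainment -/
lemma exists_dual (M : Matrix n n ℂ) :
    ∃ C : Matrix n n ℂ, ‖C‖ ≤ 1 ∧ (Matrix.trace (C * M)).re = traceNorm M := by
  refine ⟨(EM M)ᴴ, ?_, ?_⟩
  · rw [Matrix.l2_opNorm_conjTranspose]
    exact EM_norm_le_one M
  · have h : (EM M)ᴴ * M = sqrtM M := by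
      rw [EM_conjTranspose, Matrix.mul_assoc, conjTranspose_mul_self_eq_spec, pinvM, spec_mul,
        ← spec_id M]
      refine spec_congr M fun t => ?_
      by_cases h : t = 0
      · simp [g0, h]
      · push_cast
        rw [show g0 t = t⁻¹ from if_neg h]
        have ht : (t : ℂ) ≠ 0 := by exact_mod_cast h
        push_cast
        field_simp
    rw [h, traceNorm_eq]

/-- Hölder-type inequality for the trace norm -/
lemma traceNorm_mul_mul_le (X Q Y : Matrix n n ℂ) :
    traceNorm (X * Q * Y) ≤ ‖X‖ * ‖Y‖ * traceNorm Q := by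
  obtain ⟨C, hC1, hC2⟩ := exists_dual (X * Q * Y)
  rw [← hC2]
  rw [show C * (X * Q * Y) = (C * X * Q) * Y by simp only [Matrix.mul_assoc],
    Matrix.trace_mul_comm, show Y * (C * X * Q) = (Y * C * X) * Q by
      simp only [Matrix.mul_assoc]]
  refine (re_trace_le _ _).trans ?_
  have hYCX : ‖Y * C * X‖ ≤ ‖Y‖ * ‖X‖ := by
    calc ‖Y * C * X‖ ≤ ‖Y * C‖ * ‖X‖ := norm_mul_le _ _
      _ ≤ ‖Y‖ * ‖C‖ * ‖X‖ :=
          mul_le_mul_of_nonneg_right (norm_mul_le _ _) (norm_nonneg _)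
      _ ≤ ‖Y‖ * 1 * ‖X‖ :=
          mul_le_mul_of_nonneg_right
            (mul_le_mul_of_nonneg_left hC1 (norm_nonneg Y)) (norm_nonneg X)
      _ = ‖Y‖ * ‖X‖ := by ring
  calc ‖Y * C * X‖ * traceNorm Q ≤ (‖Y‖ * ‖X‖) * traceNorm Q :=
        mul_le_mul_of_nonneg_right hYCX (traceNorm_nonneg' Q)
    _ = ‖X‖ * ‖Y‖ * traceNorm Q := by ring

end Aux

section Main
open Matrix
open scoped Matrix.Norms.L2Operator

/-- The map `M_δ[Q] = ∑ⱼ Aⱼ Q Aⱼᴴ` built from the Kraus operators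
`A₀ = I − (δ/2)∑ⱼ LⱼᴴLⱼ − iδH`, `Aⱼ = √δ Lⱼ` agrees with the first-order expansion
`Q + δ𝓛[Q]` of Lindblad evolution up to `δ²(∑ⱼ‖Lⱼ‖² + ‖H‖)²` in trace norm. -/
theorem M_delta_first_order_accurate {d m : ℕ} (H : Matrix (Fin d) (Fin d) ℂ)
    (hH : H.IsHermitian) (L : Fin m → Matrix (Fin d) (Fin d) ℂ) (δ : ℝ) (hδ : 0 < δ)
    (A₀ : Matrix (Fin d) (Fin d) ℂ)
    (hA₀ : A₀ = 1 - ((δ : ℂ)/2) • (∑ j, (L j)ᴴ * L j) - (Complex.I * (δ : ℂ)) • H)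
    (A : Fin m → Matrix (Fin d) (Fin d) ℂ)
    (hA : ∀ j, A j = ((Real.sqrt δ : ℝ) : ℂ) • L j)
    (Lind : Matrix (Fin d) (Fin d) ℂ → Matrix (Fin d) (Fin d) ℂ)
    (hLind : ∀ ρ, Lind ρ = -(Complex.I • (H * ρ - ρ * H)) +
      ∑ j, (L j * ρ * (L j)ᴴ - ((1:ℂ)/2) • ((L j)ᴴ * L j * ρ) - ((1:ℂ)/2) • (ρ * ((L j)ᴴ * L j))))
    (Q : Matrix (Fin d) (Fin d) ℂ) (hQ : traceNorm Q = 1) :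
    traceNorm ((A₀ * Q * A₀ᴴ + ∑ j, A j * Q * (A j)ᴴ) - Q - (δ : ℂ) • Lind Q)
      ≤ δ ^ 2 * ((∑ j, opNorm (L j) ^ 2) + opNorm H) ^ 2 := by
  set S : Matrix (Fin d) (Fin d) ℂ := ∑ j, (L j)ᴴ * L j with hSdef
  have hSherm : Sᴴ = S := by
    rw [hSdef, Matrix.conjTranspose_sum]
    exact Finset.sum_congr rfl fun j _ => by
      rw [Matrix.conjTranspose_mul, Matrix.conjTranspose_conjTranspose]
  set B : Matrix (Fin d) (Fin d) ℂ := ((δ:ℂ)/2) • S + (Complex.I * δ) • H with hBdef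
  have hA₀H : A₀ᴴ = 1 - ((δ:ℂ)/2) • S + (Complex.I * δ) • H := by
    rw [hA₀]
    rw [Matrix.conjTranspose_sub, Matrix.conjTranspose_sub, Matrix.conjTranspose_smul,
      Matrix.conjTranspose_smul, Matrix.conjTranspose_one, hSherm, hH.eq]
    rw [show star ((δ:ℂ)/2) = (δ:ℂ)/2 by
      simp [Complex.star_def, Complex.conj_ofReal, map_div₀]]
    rw [show star (Complex.I * (δ:ℂ)) = -(Complex.I * δ) by
      simp [Complex.star_def, Complex.conj_ofReal, Complex.conj_I]]
    rw [neg_smul, sub_neg_eq_add]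
  have hBH : Bᴴ = ((δ:ℂ)/2) • S - (Complex.I * δ) • H := by
    rw [hBdef, Matrix.conjTranspose_add, Matrix.conjTranspose_smul, Matrix.conjTranspose_smul,
      hSherm, hH.eq]
    rw [show star ((δ:ℂ)/2) = (δ:ℂ)/2 by
      simp [Complex.star_def, Complex.conj_ofReal, map_div₀]]
    rw [show star (Complex.I * (δ:ℂ)) = -(Complex.I * δ) by
      simp [Complex.star_def, Complex.conj_ofReal, Complex.conj_I]]
    rw [neg_smul, ← sub_eq_add_neg]
  have hsum : (∑ j, A j * Q * (A j)ᴴ) = (δ:ℂ) • ∑ j, L j * Q * (L j)ᴴ := by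
    rw [Finset.smul_sum]
    refine Finset.sum_congr rfl fun j _ => ?_
    rw [hA j, Matrix.conjTranspose_smul]
    rw [show star ((Real.sqrt δ : ℝ) : ℂ) = ((Real.sqrt δ : ℝ) : ℂ) from Complex.conj_ofReal _]
    rw [smul_mul_assoc, smul_mul_assoc, mul_smul_comm, smul_smul, ← Complex.ofReal_mul,
      Real.mul_self_sqrt hδ.le]
  have hLsum : (∑ j, (L j * Q * (L j)ᴴ - ((1:ℂ)/2) • ((L j)ᴴ * L j * Q)
        - ((1:ℂ)/2) • (Q * ((L j)ᴴ * L j))))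
      = (∑ j, L j * Q * (L j)ᴴ) - ((1:ℂ)/2) • (S * Q) - ((1:ℂ)/2) • (Q * S) := by
    rw [Finset.sum_sub_distrib, Finset.sum_sub_distrib, ← Finset.smul_sum, ← Finset.smul_sum,
      ← Finset.sum_mul, ← Finset.mul_sum, hSdef]
  have key : (A₀ * Q * A₀ᴴ + ∑ j, A j * Q * (A j)ᴴ) - Q - (δ : ℂ) • Lind Q = B * Q * Bᴴ := by
    rw [hA₀H, hA₀, hsum, hLind Q, hLsum, hBH, hBdef]
    set T : Matrix (Fin d) (Fin d) ℂ := ∑ j, L j * Q * (L j)ᴴ with hTdef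
    simp only [mul_sub, sub_mul, mul_add, add_mul, mul_one, one_mul, smul_mul_assoc,
      mul_smul_comm, smul_sub, smul_add, smul_smul, smul_neg, mul_assoc]
    match_scalars <;> ring
  rw [key]
  simp only [opNorm_eq]
  have hSnn : 0 ≤ ∑ j, ‖L j‖ ^ 2 := Finset.sum_nonneg fun j _ => sq_nonneg _
  have hSnorm : ‖S‖ ≤ ∑ j, ‖L j‖ ^ 2 := by
    refine (norm_sum_le _ _).trans (le_of_eq ?_)
    refine Finset.sum_congr rfl fun j _ => ?_
    rw [Matrix.l2_opNorm_conjTranspose_mul_self, sq]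
  have hBnorm : ‖B‖ ≤ δ * ((∑ j, ‖L j‖ ^ 2) + ‖H‖) := by
    calc ‖B‖ ≤ ‖((δ:ℂ)/2) • S‖ + ‖(Complex.I * δ) • H‖ := norm_add_le _ _
      _ = (δ/2) * ‖S‖ + δ * ‖H‖ := by
          rw [norm_smul, norm_smul]
          congr 1
          · congr 1
            rw [norm_div]
            simp [abs_of_pos hδ]
          · congr 1
            rw [norm_mul]
            simp [abs_of_pos hδ]
      _ ≤ δ * ((∑ j, ‖L j‖ ^ 2) + ‖H‖) := by nlinarith [norm_nonneg H, norm_nonneg S]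
  have hfin := traceNorm_mul_mul_le B Q Bᴴ
  rw [Matrix.l2_opNorm_conjTranspose, hQ, mul_one] at hfin
  refine hfin.trans ?_
  have hBnn := norm_nonneg B
  nlinarith [norm_nonneg H]

end Main
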